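/- One step of the inexact adaptive Galerkin iteration is a contraction in the energy norm: Let ζ ≥ 0 and ω₀ ∈ (0,1] with (1−ζ)ω₀ − ζ > 0, and let γ ≥ 0. Let w ∈ H, let r ∈ H satisfy ‖r − (B w − f)‖ ≤ ζ‖B w − f‖, let Λ' ⊆ 𝒥 be a finite set with supp w ⊆ Λ' and ‖r|_{Λ'}‖ ≥ ω₀‖r‖, and let u' ∈ H satisfy supp u' ⊆ Λ' and ‖(B u' − f)|_{Λ'}‖ ≤ γ‖r‖. Then ‖u − u'‖_B ≤ ρ‖u − w‖_B with ρ = (1 − ((1−ζ)ω₀ − ζ)²·κ(B)^{−1} + γ²(1+ζ)²·κ(B))^{1/2}. -/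

import Mathlib

open scoped RealInnerProductSpace

open Classical in
noncomputable def restr {J : Type*} (Λ : Set J) (v : lp (fun _ : J => ℝ) 2) :
    lp (fun _ : J => ℝ) 2 :=
  ⟨fun i => if i ∈ Λ then v i else 0, by
    have hv : Memℓp (fun i => v i) 2 := lp.memℓp v
    have : Memℓp (fun i => if i ∈ Λ then v i else 0) 2 := by
      rw [memℓp_gen_iff (by norm_num)] at hv ⊢
      refine Summable.of_nonneg_of_le (fun i => ?_) (fun i => ?_) hv
      · positivity
      · by_cases h : i ∈ Λ <;> simp [h] <;> positivity
    exact this⟩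

open Classical in
theorem restr_apply {J : Type*} (Λ : Set J) (v : lp (fun _ : J => ℝ) 2) (i : J) :
    restr Λ v i = if i ∈ Λ then v i else 0 := rfl

theorem restr_sub {J : Type*} (Λ : Set J) (x y : lp (fun _ : J => ℝ) 2) :
    restr Λ (x - y) = restr Λ x - restr Λ y := by
  apply lp.ext
  funext i
  classical
  simp [restr_apply, lp.coeFn_sub, Pi.sub_apply]
  split <;> simp

theorem inner_restr {J : Type*} [Countable J] (Λ : Set J) (x v : lp (fun _ : J => ℝ) 2)
    (hv : ∀ i ∉ Λ, v i = 0) : ⟪x, v⟫ = ⟪restr Λ x, v⟫ := by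
  rw [lp.inner_eq_tsum, lp.inner_eq_tsum]
  congr 1
  funext i
  classical
  by_cases h : i ∈ Λ <;> simp [restr_apply, h, hv i]

theorem norm_restr_le {J : Type*} [Countable J] (Λ : Set J) (x : lp (fun _ : J => ℝ) 2) :
    ‖restr Λ x‖ ≤ ‖x‖ := by
  classical
  have h1 : ⟪x, restr Λ x⟫ = ⟪restr Λ x, restr Λ x⟫ :=
    inner_restr Λ x (restr Λ x) (fun i hi => by simp [restr_apply, hi])
  have h2 : ⟪restr Λ x, restr Λ x⟫ = ‖restr Λ x‖ ^ 2 := real_inner_self_eq_norm_sq _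
  have h3 : ⟪x, restr Λ x⟫ ≤ ‖x‖ * ‖restr Λ x‖ := real_inner_le_norm _ _
  nlinarith [norm_nonneg (restr Λ x), norm_nonneg x]

section BCS
variable {J : Type*} [Countable J] (B : lp (fun _ : J => ℝ) 2 →L[ℝ] lp (fun _ : J => ℝ) 2)

theorem bcs (hsa : ∀ x y, ⟪B x, y⟫ = ⟪x, B y⟫) (hnn : ∀ v, 0 ≤ ⟪B v, v⟫)
    (x y : lp (fun _ : J => ℝ) 2) : ⟪B x, y⟫ ^ 2 ≤ ⟪B x, x⟫ * ⟪B y, y⟫ := by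
  have expand : ∀ t : ℝ, 0 ≤ ⟪B x, x⟫ - 2 * t * ⟪B x, y⟫ + t ^ 2 * ⟪B y, y⟫ := by
    intro t
    have h := hnn (x - t • y)
    have : ⟪B (x - t • y), x - t • y⟫
        = ⟪B x, x⟫ - 2 * t * ⟪B x, y⟫ + t ^ 2 * ⟪B y, y⟫ := by
      rw [map_sub, map_smul]
      rw [inner_sub_left, inner_sub_right, inner_sub_right]
      rw [inner_smul_left, inner_smul_right, inner_smul_left, inner_smul_right]
      have h1 : ⟪B y, x⟫ = ⟪B x, y⟫ := by rw [hsa, real_inner_comm]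
      rw [RCLike.conj_to_real]
      ring_nf
      rw [h1]; ring
    linarith [this ▸ h]
  rcases eq_or_lt_of_le (hnn y) with hy | hy
  · -- ⟪B y, y⟫ = 0 : then ⟪B x, y⟫ must be 0? use expand with large t
    by_contra hcon
    push_neg at hcon
    have hxy : ⟪B x, y⟫ ≠ 0 := by
      intro h0; rw [h0] at hcon; nlinarith [hnn x]
    have := expand ((⟪B x, x⟫ + 1) / (2 * ⟪B x, y⟫))
    rw [← hy] at this
    have h2 : (⟪B x, x⟫ + 1) / (2 * ⟪B x, y⟫) * ⟪B x, y⟫ = (⟪B x, x⟫ + 1) / 2 := by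
      field_simp
    nlinarith [this, hnn x]
  · have := expand (⟪B x, y⟫ / ⟪B y, y⟫)
    have h2 : ⟪B x, y⟫ / ⟪B y, y⟫ * ⟪B y, y⟫ = ⟪B x, y⟫ := div_mul_cancel₀ _ (ne_of_gt hy)
    nlinarith [this, sq_nonneg (⟪B x, y⟫ / ⟪B y, y⟫)]
end BCS

section Galerkin
variable {J : Type*} [Countable J]

open Classical in
noncomputable def extmap (Λ' : Finset J) (g : ↥Λ' → ℝ) : lp (fun _ : J => ℝ) 2 :=
  ⟨fun i => if h : i ∈ Λ' then g ⟨i, h⟩ else 0, by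
    apply memℓp_gen
    apply summable_of_ne_finset_zero (s := Λ')
    intro i hi
    simp [hi]⟩

open Classical in
theorem extmap_apply (Λ' : Finset J) (g : ↥Λ' → ℝ) (i : J) :
    extmap Λ' g i = if h : i ∈ Λ' then g ⟨i, h⟩ else 0 := rfl

theorem galerkin_exists (B : lp (fun _ : J => ℝ) 2 →L[ℝ] lp (fun _ : J => ℝ) 2)
    (rB : ℝ) (hrB : 0 < rB) (hell : ∀ v, rB * ‖v‖ ^ 2 ≤ ⟪B v, v⟫)
    (f : lp (fun _ : J => ℝ) 2) (Λ' : Finset J) :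
    ∃ g : lp (fun _ : J => ℝ) 2, (∀ i ∉ Λ', g i = 0) ∧ ∀ i ∈ Λ', B g i = f i := by
  classical
  have Elin : ∀ (a b : ↥Λ' → ℝ) (c : ℝ),
      extmap Λ' (a + c • b) = extmap Λ' a + c • extmap Λ' b := by
    intro a b c
    apply lp.ext
    funext i
    simp only [lp.coeFn_add, lp.coeFn_smul, Pi.add_apply, Pi.smul_apply, extmap_apply,
      smul_eq_mul]
    split <;> simp <;> ring
  let T : (↥Λ' → ℝ) →ₗ[ℝ] (↥Λ' → ℝ) :=
    { toFun := fun g j => B (extmap Λ' g) j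
      map_add' := by
        intro a b
        funext j
        have : extmap Λ' (a + b) = extmap Λ' a + extmap Λ' b := by
          have := Elin a b 1; simpa using this
        simp [this, lp.coeFn_add]
      map_smul' := by
        intro c a
        funext j
        have : extmap Λ' (c • a) = c • extmap Λ' a := by
          have h0 : extmap Λ' (0 : ↥Λ' → ℝ) = 0 := by
            apply lp.ext; funext i
            simp [extmap_apply]
          have := Elin 0 a c
          simpa [h0] using this
        simp [this, lp.coeFn_smul] }
  have hinj : Function.Injective T := by
    rw [← LinearMap.ker_eq_bot, LinearMap.ker_eq_bot']
    intro g hg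
    have hres : ∀ i ∈ Λ', B (extmap Λ' g) i = 0 := by
      intro i hi
      have := congrFun hg ⟨i, hi⟩
      simpa [T] using this
    have hsupp : ∀ i ∉ (Λ' : Set J), extmap Λ' g i = 0 := by
      intro i hi; rw [extmap_apply, dif_neg (by simpa using hi)]
    have h0 : ⟪B (extmap Λ' g), extmap Λ' g⟫ = 0 := by
      rw [inner_restr (Λ' : Set J) _ _ hsupp]
      have : restr (Λ' : Set J) (B (extmap Λ' g)) = 0 := by
        apply lp.ext
        funext i
        by_cases h : i ∈ Λ' <;> simp [restr_apply, h, hres]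
      rw [this, inner_zero_left]
    have := hell (extmap Λ' g)
    have hle : rB * ‖extmap Λ' g‖ ^ 2 ≤ 0 := h0 ▸ this
    have hsq : ‖extmap Λ' g‖ ^ 2 = 0 := by nlinarith [sq_nonneg ‖extmap Λ' g‖]
    have hnorm : ‖extmap Λ' g‖ = 0 := by
      have := pow_eq_zero_iff (n := 2) (by norm_num) |>.mp hsq
      exact this
    have hzero : extmap Λ' g = 0 := norm_eq_zero.mp hnorm
    funext j
    have := congrFun (congrArg (fun (v : lp (fun _ : J => ℝ) 2) => (v : ∀ _ : J, ℝ)) hzero) j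
    simp only [extmap_apply, lp.coeFn_zero, Pi.zero_apply] at this
    rw [dif_pos j.2] at this
    simpa using this
  have hsurj : Function.Surjective T := by
    have : FiniteDimensional ℝ (↥Λ' → ℝ) := inferInstance
    exact (LinearMap.injective_iff_surjective).mp hinj
  obtain ⟨g, hg⟩ := hsurj (fun j => f j)
  refine ⟨extmap Λ' g, fun i hi => by simp [extmap_apply, hi], fun i hi => ?_⟩
  have := congrFun hg ⟨i, hi⟩
  simpa [T] using this
end Galerkin

theorem aux_cancel {a q b d p : ℝ} (ha : 0 ≤ a) (hq : 0 ≤ q) (hb : 0 ≤ b)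
    (h : (a ^ 2) ^ 2 ≤ q * p) (h2 : p ≤ d * a) (h3 : d ≤ b * a) : a ^ 2 ≤ b * q := by
  rcases eq_or_lt_of_le ha with h0 | h0
  · rw [← h0]; nlinarith
  · nlinarith [mul_le_mul_of_nonneg_right h3 ha, mul_le_mul_of_nonneg_left h2 hq,
      mul_le_mul_of_nonneg_left (mul_le_mul_of_nonneg_right h3 ha) hq, mul_pos h0 h0]

theorem aux_sq_le {x c t : ℝ} (hx : 0 ≤ x) (h1 : x ≤ c) (h2 : c ^ 2 ≤ t) : x ^ 2 ≤ t := by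
  nlinarith

theorem aux_partA {η b v Q1 Q2 N : ℝ} (hb : 0 < b) (hv : 0 < v) (hQ2 : 0 ≤ Q2)
    (h1 : η ^ 2 * N ^ 2 ≤ b * Q2) (h2 : Q1 ≤ v * N ^ 2) :
    η ^ 2 * (b * v)⁻¹ * Q1 ≤ Q2 := by
  rw [mul_comm (η ^ 2) ((b * v)⁻¹), mul_assoc, inv_mul_le_iff₀ (by positivity)]
  nlinarith [mul_le_mul_of_nonneg_left h2 (sq_nonneg η), mul_le_mul_of_nonneg_left h1 hv.le]

theorem aux_Qz {Q γ r binv n : ℝ} (hQ : 0 ≤ Q) (hbinv : 0 ≤ binv) (hγ : 0 ≤ γ) (hr : 0 ≤ r)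
    (hn : 0 ≤ n) (h1 : Q ≤ γ * r * n) (h2 : n ^ 2 ≤ binv * Q) :
    Q ≤ γ ^ 2 * r ^ 2 * binv := by
  rcases eq_or_lt_of_le hQ with h0 | h0
  · rw [← h0]; positivity
  · nlinarith [mul_le_mul h1 h1 hQ (le_trans hQ h1),
      mul_le_mul_of_nonneg_left h2 (mul_nonneg (mul_nonneg hγ hγ) (mul_nonneg hr hr)), h0.le]

theorem aux_rho {η k γ ζ : ℝ} (hη0 : 0 < η) (hη1 : η ≤ 1) (hk : 1 ≤ k) (hγ : 0 ≤ γ)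
    (hζ : 0 ≤ ζ) : 0 ≤ 1 - η ^ 2 * k⁻¹ + γ ^ 2 * (1 + ζ) ^ 2 * k := by
  have hkpos : 0 < k := lt_of_lt_of_le one_pos hk
  have hik : k⁻¹ ≤ 1 := inv_le_one_of_one_le₀ hk
  have hik0 : 0 ≤ k⁻¹ := by positivity
  nlinarith [sq_nonneg η, mul_nonneg (mul_nonneg (sq_nonneg γ) (sq_nonneg (1+ζ))) hkpos.le]

set_option maxHeartbeats 1000000

open Classical in
/-- **One step of the inexact adaptive Galerkin iteration is a contraction in the energy
norm.**  With `B` bounded, self-adjoint and elliptic on `H = ℓ²(𝒥)`, boundedly invertible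
with inverse `Binv`, `κ(B) = ‖B‖·‖B⁻¹‖`, and `u = B⁻¹f`:  let `ζ ≥ 0`, `ω₀ ∈ (0,1]` with
`(1−ζ)ω₀ − ζ > 0`, `γ ≥ 0`; let `w ∈ H`, `r` with `‖r − (Bw − f)‖ ≤ ζ‖Bw − f‖`, `Λ'`
finite with `supp w ⊆ Λ'` and `‖r|_{Λ'}‖ ≥ ω₀‖r‖`, and `u'` with `supp u' ⊆ Λ'` and
`‖(Bu' − f)|_{Λ'}‖ ≤ γ‖r‖`.  Then `‖u − u'‖_B ≤ ρ‖u − w‖_B` with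
`ρ = (1 − ((1−ζ)ω₀ − ζ)²·κ(B)⁻¹ + γ²(1+ζ)²·κ(B))^{1/2}`. -/
theorem stmt_17 {J : Type*} [Countable J]
    (B Binv : lp (fun _ : J => ℝ) 2 →L[ℝ] lp (fun _ : J => ℝ) 2)
    (rB RB : ℝ) (hrB : 0 < rB) (hrRB : rB ≤ RB)
    (hsa : ∀ x y, ⟪B x, y⟫ = ⟪x, B y⟫)
    (hell : ∀ v, rB * ‖v‖ ^ 2 ≤ ⟪B v, v⟫ ∧ ⟪B v, v⟫ ≤ RB * ‖v‖ ^ 2)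
    (hinv1 : Binv.comp B = ContinuousLinearMap.id ℝ _)
    (hinv2 : B.comp Binv = ContinuousLinearMap.id ℝ _)
    (f u : lp (fun _ : J => ℝ) 2) (hu : B u = f)
    (ζ ω₀ γ : ℝ) (hζ : 0 ≤ ζ) (hω₀0 : 0 < ω₀) (hω₀1 : ω₀ ≤ 1)
    (hpos : 0 < (1 - ζ) * ω₀ - ζ) (hγ : 0 ≤ γ)
    (w r : lp (fun _ : J => ℝ) 2)
    (hr : ‖r - (B w - f)‖ ≤ ζ * ‖B w - f‖)
    (Λ' : Finset J)
    (hwsupp : ∀ i : J, i ∉ Λ' → w i = 0)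
    (hbulk : ω₀ * ‖r‖ ≤ ‖restr (↑Λ') r‖)
    (u' : lp (fun _ : J => ℝ) 2)
    (hu'supp : ∀ i : J, i ∉ Λ' → u' i = 0)
    (hu'res : ‖restr (↑Λ') (B u' - f)‖ ≤ γ * ‖r‖) :
    Real.sqrt ⟪B (u - u'), u - u'⟫ ≤
      Real.sqrt (1 - ((1 - ζ) * ω₀ - ζ) ^ 2 * (‖B‖ * ‖Binv‖)⁻¹
          + γ ^ 2 * (1 + ζ) ^ 2 * (‖B‖ * ‖Binv‖)) *
        Real.sqrt ⟪B (u - w), u - w⟫ := by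
  classical
  have hnn : ∀ v, 0 ≤ ⟪B v, v⟫ := fun v =>
    le_trans (by positivity) ((hell v).1)
  have hBinvB : ∀ z, Binv (B z) = z := fun z => by
    have := ContinuousLinearMap.ext_iff.mp hinv1 z
    simpa using this
  have hBBinv : ∀ z, B (Binv z) = z := fun z => by
    have := ContinuousLinearMap.ext_iff.mp hinv2 z
    simpa using this
  by_cases htriv : ∀ v : lp (fun _ : J => ℝ) 2, v = 0
  · rw [htriv (u - u'), htriv (u - w), map_zero, inner_zero_right, Real.sqrt_zero, mul_zero]
  · push_neg at htriv
    obtain ⟨v₀, hv₀⟩ := htriv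
    have hv₀n : 0 < ‖v₀‖ := norm_pos_iff.mpr hv₀
    -- ‖B‖ ≥ rB > 0
    have hBpos : 0 < ‖B‖ := by
      have h1 := (hell v₀).1
      have h2 : ⟪B v₀, v₀⟫ ≤ ‖B v₀‖ * ‖v₀‖ := real_inner_le_norm _ _
      have h3 : ‖B v₀‖ ≤ ‖B‖ * ‖v₀‖ := B.le_opNorm v₀
      nlinarith [mul_le_mul_of_nonneg_right h3 (norm_nonneg v₀),
        mul_pos hrB (mul_pos hv₀n hv₀n), norm_nonneg B]
    have hκ1 : 1 ≤ ‖B‖ * ‖Binv‖ := by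
      have h1 : ‖v₀‖ ≤ ‖Binv‖ * ‖B v₀‖ := by
        conv_lhs => rw [← hBinvB v₀]
        exact Binv.le_opNorm _
      have h2 : ‖B v₀‖ ≤ ‖B‖ * ‖v₀‖ := B.le_opNorm v₀
      nlinarith [mul_le_mul_of_nonneg_left h2 (norm_nonneg Binv), hv₀n]
    have hκpos : 0 < ‖B‖ * ‖Binv‖ := lt_of_lt_of_le one_pos hκ1
    have hBinvpos : 0 < ‖Binv‖ := by nlinarith [norm_nonneg Binv]
    set η := (1 - ζ) * ω₀ - ζ with hη
    set N := ‖B w - f‖ with hN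
    have hNnn : 0 ≤ N := norm_nonneg _
    -- residual norm bounds
    have h1 : ‖r‖ ≤ (1 + ζ) * N := by
      have := norm_sub_norm_le r (B w - f)
      linarith [hr]
    have h2 : (1 - ζ) * N ≤ ‖r‖ := by
      have h := norm_sub_norm_le (B w - f) r
      rw [norm_sub_rev (B w - f) r] at h
      linarith [hr]
    -- bulk chasing
    have h3 : η * N ≤ ‖restr (↑Λ' : Set J) (B w - f)‖ := by
      have hsplit : restr (↑Λ' : Set J) r - restr (↑Λ' : Set J) (B w - f)
          = restr (↑Λ' : Set J) (r - (B w - f)) := (restr_sub _ _ _).symm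
      have ht : ‖restr (↑Λ' : Set J) r‖ - ‖restr (↑Λ' : Set J) (B w - f)‖
          ≤ ‖restr (↑Λ' : Set J) (r - (B w - f))‖ := by
        have := norm_sub_norm_le (restr (↑Λ' : Set J) r) (restr (↑Λ' : Set J) (B w - f))
        rw [hsplit] at this
        linarith
      have hle : ‖restr (↑Λ' : Set J) (r - (B w - f))‖ ≤ ζ * N :=
        le_trans (norm_restr_le _ _) hr
      have hb2 : ω₀ * ((1 - ζ) * N) ≤ ω₀ * ‖r‖ :=
        mul_le_mul_of_nonneg_left h2 (le_of_lt hω₀0)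
      have hb := hbulk
      rw [hη]
      nlinarith [ht, hle, hb2, hb]
    -- Galerkin solution
    obtain ⟨g, hg0, hgB⟩ := galerkin_exists B rB hrB (fun v => (hell v).1) f Λ'
    -- orthogonality
    have subApply : ∀ (x y : lp (fun _ : J => ℝ) 2) (i : J), (x - y) i = x i - y i := by
      intro x y i
      rw [lp.coeFn_sub]; rfl
    have zeroApply : ∀ i : J, (0 : lp (fun _ : J => ℝ) 2) i = 0 := by
      intro i; rw [lp.coeFn_zero]; rfl
    have hrestr0 : restr (↑Λ' : Set J) (B g - f) = 0 := by
      apply lp.ext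
      funext i
      rw [restr_apply, zeroApply]
      by_cases h : i ∈ (↑Λ' : Set J)
      · rw [if_pos h, subApply, hgB i (by simpa using h), sub_self]
      · rw [if_neg h]
    have ortho : ∀ v : lp (fun _ : J => ℝ) 2, (∀ i ∉ Λ', v i = 0) → ⟪B g - f, v⟫ = 0 := by
      intro v hv
      rw [inner_restr (↑Λ' : Set J) _ v (fun i hi => hv i (by simpa using hi)), hrestr0,
        inner_zero_left]
    have orthoug : ∀ v : lp (fun _ : J => ℝ) 2, (∀ i ∉ Λ', v i = 0) → ⟪B (u - g), v⟫ = 0 := by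
      intro v hv
      have hBug : B (u - g) = -(B g - f) := by rw [map_sub, hu]; abel
      rw [hBug, inner_neg_left, ortho v hv, neg_zero]
    -- supports
    have sgw : ∀ i ∉ Λ', (g - w : lp (fun _ : J => ℝ) 2) i = 0 := by
      intro i hi
      rw [subApply, hg0 i hi, hwsupp i hi, sub_zero]
    have sgu' : ∀ i ∉ Λ', (g - u' : lp (fun _ : J => ℝ) 2) i = 0 := by
      intro i hi
      rw [subApply, hg0 i hi, hu'supp i hi, sub_zero]
    -- expansion
    have expand : ∀ a b : lp (fun _ : J => ℝ) 2,
        ⟪B (a + b), a + b⟫ = ⟪B a, a⟫ + 2 * ⟪B a, b⟫ + ⟪B b, b⟫ := by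
      intro a b
      rw [map_add, inner_add_left, inner_add_right, inner_add_right]
      have hba : ⟪B b, a⟫ = ⟪B a, b⟫ := by rw [hsa, real_inner_comm]
      linarith
    -- Pythagoras
    have pyth1 : ⟪B (u - w), u - w⟫ = ⟪B (u - g), u - g⟫ + ⟪B (g - w), g - w⟫ := by
      have hdecomp : u - w = (u - g) + (g - w) := by abel
      rw [hdecomp, expand, orthoug _ sgw]
      ring
    have pyth2 : ⟪B (u - u'), u - u'⟫ = ⟪B (u - g), u - g⟫ + ⟪B (g - u'), g - u'⟫ := by
      have hdecomp : u - u' = (u - g) + (g - u') := by abel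
      rw [hdecomp, expand, orthoug _ sgu']
      ring
    -- operator norm inequalities
    have hBnormsq : ∀ z, ‖B z‖ ^ 2 ≤ ‖B‖ * ⟪B z, z⟫ := by
      intro z
      have h := bcs B hsa hnn z (B z)
      have h1 : ⟪B z, B z⟫ = ‖B z‖ ^ 2 := real_inner_self_eq_norm_sq _
      have h2 : ⟪B (B z), B z⟫ ≤ ‖B (B z)‖ * ‖B z‖ := real_inner_le_norm _ _
      have h3 : ‖B (B z)‖ ≤ ‖B‖ * ‖B z‖ := B.le_opNorm _
      rw [h1] at h
      exact aux_cancel (norm_nonneg (B z)) (hnn z) (norm_nonneg B) h h2 h3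
    have hQle : ∀ z : lp (fun _ : J => ℝ) 2, ⟪B z, z⟫ ≤ ‖Binv‖ * ‖B z‖ ^ 2 := by
      intro z
      have h1 : ⟪B z, z⟫ ≤ ‖B z‖ * ‖z‖ := real_inner_le_norm _ _
      have h2 : ‖z‖ ≤ ‖Binv‖ * ‖B z‖ := by
        conv_lhs => rw [← hBinvB z]
        exact Binv.le_opNorm _
      calc ⟪B z, z⟫ ≤ ‖B z‖ * ‖z‖ := h1
        _ ≤ ‖B z‖ * (‖Binv‖ * ‖B z‖) :=
            mul_le_mul_of_nonneg_left h2 (norm_nonneg _)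
        _ = ‖Binv‖ * ‖B z‖ ^ 2 := by ring
    have hznormsq : ∀ z : lp (fun _ : J => ℝ) 2, ‖z‖ ^ 2 ≤ ‖Binv‖ * ⟪B z, z⟫ := by
      intro z
      have h := bcs B hsa hnn (Binv z) z
      rw [hBBinv z] at h
      have h1 : ⟪z, z⟫ = ‖z‖ ^ 2 := real_inner_self_eq_norm_sq _
      rw [h1] at h
      have h2 : ⟪z, Binv z⟫ ≤ ‖z‖ * ‖Binv z‖ := real_inner_le_norm _ _
      have h3 : ‖Binv z‖ ≤ ‖Binv‖ * ‖z‖ := Binv.le_opNorm _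
      rw [mul_comm (⟪z, Binv z⟫ : ℝ)] at h
      rw [mul_comm ‖z‖ ‖Binv z‖] at h2
      exact aux_cancel (norm_nonneg z) (hnn z) (norm_nonneg Binv) h h2 h3
    -- part A : η² κ⁻¹ Q(u-w) ≤ Q(g-w)
    have hA1 : η ^ 2 * N ^ 2 ≤ ‖B‖ * ⟪B (g - w), g - w⟫ := by
      have hres : restr (↑Λ' : Set J) (B (g - w)) = -(restr (↑Λ' : Set J) (B w - f)) := by
        have : B (g - w) = (B g - f) - (B w - f) := by rw [map_sub]; abel
        rw [this, restr_sub, hrestr0, zero_sub]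
      have hn1 : ‖restr (↑Λ' : Set J) (B (g - w))‖ = ‖restr (↑Λ' : Set J) (B w - f)‖ := by
        rw [hres, norm_neg]
      have hn2 : η * N ≤ ‖B (g - w)‖ := by
        have := norm_restr_le (↑Λ' : Set J) (B (g - w))
        rw [hn1] at this
        linarith [h3]
      have hb := hBnormsq (g - w)
      have : (η * N) ^ 2 ≤ ‖B‖ * ⟪B (g - w), g - w⟫ :=
        aux_sq_le (mul_nonneg hpos.le hNnn) hn2 hb
      calc η ^ 2 * N ^ 2 = (η * N) ^ 2 := by ring
        _ ≤ _ := this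
    have hA2 : ⟪B (u - w), u - w⟫ ≤ ‖Binv‖ * N ^ 2 := by
      have h := hQle (u - w)
      have hB : B (u - w) = -(B w - f) := by rw [map_sub, hu]; abel
      have hNe : ‖B (u - w)‖ = N := by rw [hB, norm_neg]
      rw [hNe] at h
      exact h
    have partA : η ^ 2 * (‖B‖ * ‖Binv‖)⁻¹ * ⟪B (u - w), u - w⟫ ≤ ⟪B (g - w), g - w⟫ := by
      exact aux_partA hBpos hBinvpos (hnn (g - w)) hA1 hA2
    -- part B : Q(g-u') ≤ γ²(1+ζ)² κ Q(u-w)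
    have partB : ⟪B (g - u'), g - u'⟫
        ≤ γ ^ 2 * (1 + ζ) ^ 2 * (‖B‖ * ‖Binv‖) * ⟪B (u - w), u - w⟫ := by
      set z := g - u' with hz
      have hQz : ⟪B z, z⟫ ≤ γ * ‖r‖ * ‖z‖ := by
        have hsplit : ⟪B z, z⟫ = ⟪B g - f, z⟫ + ⟪f - B u', z⟫ := by
          have : B z = (B g - f) + (f - B u') := by rw [hz, map_sub]; abel
          rw [this, inner_add_left]
        rw [hsplit, ortho z sgu']
        have hres : ⟪f - B u', z⟫ = ⟪restr (↑Λ' : Set J) (f - B u'), z⟫ :=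
          inner_restr _ _ _ (fun i hi => sgu' i (by simpa using hi))
        have hnr : ‖restr (↑Λ' : Set J) (f - B u')‖ = ‖restr (↑Λ' : Set J) (B u' - f)‖ := by
          have hfe : f - B u' = (0 : lp (fun _ : J => ℝ) 2) - (B u' - f) := by abel
          rw [hfe, restr_sub]
          have h0 : restr (↑Λ' : Set J) (0 : lp (fun _ : J => ℝ) 2) = 0 := by
            apply lp.ext; funext i
            rw [restr_apply]
            by_cases h : i ∈ (↑Λ' : Set J)
            · rw [if_pos h]
            · rw [if_neg h, zeroApply]
          rw [h0, zero_sub, norm_neg]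
        have hcs : ⟪restr (↑Λ' : Set J) (f - B u'), z⟫
            ≤ ‖restr (↑Λ' : Set J) (f - B u')‖ * ‖z‖ := real_inner_le_norm _ _
        rw [hres]
        calc (0:ℝ) + ⟪restr (↑Λ' : Set J) (f - B u'), z⟫
            ≤ ‖restr (↑Λ' : Set J) (f - B u')‖ * ‖z‖ := by linarith
          _ ≤ (γ * ‖r‖) * ‖z‖ := by
              apply mul_le_mul_of_nonneg_right _ (norm_nonneg z)
              rw [hnr]; exact hu'res
          _ = γ * ‖r‖ * ‖z‖ := by ring
      have hQz2 : ⟪B z, z⟫ ≤ γ ^ 2 * ‖r‖ ^ 2 * ‖Binv‖ := by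
        exact aux_Qz (hnn z) (norm_nonneg Binv) hγ (norm_nonneg r) (norm_nonneg z)
          hQz (hznormsq z)
      have hrsq : ‖r‖ ^ 2 ≤ (1 + ζ) ^ 2 * N ^ 2 := by
        calc ‖r‖ ^ 2 ≤ ((1 + ζ) * N) ^ 2 := by
              have := pow_le_pow_left₀ (norm_nonneg r) h1 2
              simpa using this
          _ = (1 + ζ) ^ 2 * N ^ 2 := by ring
      have hNsq : N ^ 2 ≤ ‖B‖ * ⟪B (u - w), u - w⟫ := by
        have h := hBnormsq (u - w)
        have hB : B (u - w) = -(B w - f) := by rw [map_sub, hu]; abel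
        have hNe : ‖B (u - w)‖ = N := by rw [hB, norm_neg]
        rw [hNe] at h
        exact h
      calc ⟪B z, z⟫ ≤ γ ^ 2 * ‖r‖ ^ 2 * ‖Binv‖ := hQz2
        _ ≤ γ ^ 2 * ((1 + ζ) ^ 2 * N ^ 2) * ‖Binv‖ := by
            apply mul_le_mul_of_nonneg_right _ (le_of_lt hBinvpos)
            exact mul_le_mul_of_nonneg_left hrsq (by positivity)
        _ ≤ γ ^ 2 * ((1 + ζ) ^ 2 * (‖B‖ * ⟪B (u - w), u - w⟫)) * ‖Binv‖ := by
            apply mul_le_mul_of_nonneg_right _ (le_of_lt hBinvpos)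
            apply mul_le_mul_of_nonneg_left _ (by positivity : (0:ℝ) ≤ γ ^ 2)
            exact mul_le_mul_of_nonneg_left hNsq (by positivity)
        _ = γ ^ 2 * (1 + ζ) ^ 2 * (‖B‖ * ‖Binv‖) * ⟪B (u - w), u - w⟫ := by ring
    -- combine
    have main : ⟪B (u - u'), u - u'⟫
        ≤ (1 - η ^ 2 * (‖B‖ * ‖Binv‖)⁻¹ + γ ^ 2 * (1 + ζ) ^ 2 * (‖B‖ * ‖Binv‖))
            * ⟪B (u - w), u - w⟫ := by
      rw [pyth2]
      have hp := pyth1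
      linarith [partA, partB]
    have hρnn : 0 ≤ 1 - η ^ 2 * (‖B‖ * ‖Binv‖)⁻¹ + γ ^ 2 * (1 + ζ) ^ 2 * (‖B‖ * ‖Binv‖) := by
      have hη1 : η ≤ 1 := by rw [hη]; nlinarith
      exact aux_rho hpos hη1 hκ1 hγ hζ
    calc Real.sqrt ⟪B (u - u'), u - u'⟫
        ≤ Real.sqrt ((1 - η ^ 2 * (‖B‖ * ‖Binv‖)⁻¹ + γ ^ 2 * (1 + ζ) ^ 2 * (‖B‖ * ‖Binv‖))
            * ⟪B (u - w), u - w⟫) := Real.sqrt_le_sqrt main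
      _ = _ := Real.sqrt_mul hρnn _
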